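/- In the three-node causal Bayesian network Z → X, Z → Y, X → Y over finite types, the interventional distribution obtained from the truncated product formula satisfies the backdoor adjustment formula: P(Y=y | do(X=x₀)) = ∑_z P(Y=y | X=x₀, Z=z)·P(Z=z), where the sum is over z with P(X=x₀, Z=z) > 0 (assuming P(X=x₀|Z=z) > 0 for all z with P(Z=z) > 0). -/

import Mathlib

open scoped Classical

/-- Backdoor adjustment in the network Z → X, Z → Y, X → Y.
joint p(z,x,y) = pZ z * pX z x * pY x z y; truncated-product interventional
P(Y=y|do(X=x₀)) = ∑_z pZ z * pY x₀ z y equals the adjustment formula. -/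
theorem backdoor_adjustment
    {γ α β : Type*} [Fintype γ] [Fintype α] [Fintype β]
    (pZ : γ → ℝ) (pX : γ → α → ℝ) (pY : α → γ → β → ℝ)
    (hZnn : ∀ z, 0 ≤ pZ z) (hZ1 : ∑ z, pZ z = 1)
    (hXnn : ∀ z x, 0 ≤ pX z x) (hX1 : ∀ z, ∑ x, pX z x = 1)
    (hYnn : ∀ x z y, 0 ≤ pY x z y) (hY1 : ∀ x z, ∑ y, pY x z y = 1)
    (p : γ → α → β → ℝ) (hp : ∀ z x y, p z x y = pZ z * pX z x * pY x z y)
    (x₀ : α) (hpos : ∀ z, 0 < pZ z → 0 < pX z x₀) (y : β) :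
    (∑ z, pZ z * pY x₀ z y) =
      ∑ z ∈ Finset.univ.filter (fun z => 0 < ∑ y', p z x₀ y'),
        (p z x₀ y / ∑ y', p z x₀ y') * (∑ x, ∑ y', p z x y') := by
  have hsy : ∀ z x, (∑ y', p z x y') = pZ z * pX z x := by
    intro z x
    simp only [hp, mul_assoc, ← Finset.mul_sum, hY1, mul_one]
  have hsx : ∀ z, (∑ x, ∑ y', p z x y') = pZ z := by
    intro z
    simp only [hsy, ← Finset.mul_sum, hX1, mul_one]
  rw [Finset.sum_filter]
  apply Finset.sum_congr rfl
  intro z _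
  by_cases h : 0 < ∑ y', p z x₀ y'
  · rw [if_pos h, hsx, hp, hsy]
    have hne : pZ z * pX z x₀ ≠ 0 := by rw [← hsy]; exact ne_of_gt h
    field_simp
    rw [mul_div_cancel_right₀ _ (right_ne_zero_of_mul hne)]
  · rw [if_neg h]
    have hz : pZ z = 0 := by
      by_contra hz
      have hzpos : 0 < pZ z := lt_of_le_of_ne (hZnn z) (Ne.symm hz)
      exact h (by rw [hsy]; exact mul_pos hzpos (hpos z hzpos))
    rw [hz, zero_mul]
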